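/- arXiv:2110.02769 — 5 statements merged into one kernel-verified Lean document; each statement's English description precedes it below -/
import Mathlib

section
/- Let ⊏ be a strict partial order on a set E that is an interval order (i.e., a ⊏ b and c ⊏ d imply a ⊏ d or c ⊏ b), and let ≺ be a relation on E satisfying the well-formedness condition: whenever e ≺⁺ e' (transitive closure), it is not the case that e' ⊑ e (reflexive closure of ⊏, i.e., neither e' = e nor e' ⊏ e). Then the happens-before relation ⊲, defined as the transitive closure of ⊏ ∪ ≺, is irreflexive. -/
/-- If `⊏` is an interval order (a strict partial order satisfying the
interval-order property), and `≺` satisfies the well-formedness condition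
(`e ≺⁺ e'` implies `¬ (e' ⊑ e)` where `⊑` is the reflexive closure of `⊏`),
then happens-before `⊲ = (⊏ ∪ ≺)⁺` is irreflexive. -/
theorem happensBefore_irreflexive {E : Type*} (rb prec : E → E → Prop)
    (hirr : Irreflexive rb) (htrans : Transitive rb)
    (hinterval : ∀ a b c d, rb a b → rb c d → rb a d ∨ rb c b)
    (hwf : ∀ e e', Relation.TransGen prec e e' → ¬ (e' = e ∨ rb e' e)) :
    Irreflexive (Relation.TransGen (fun a b => rb a b ∨ prec a b)) := by
  -- normal form
  set N : E → E → Prop := fun a b =>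
    Relation.TransGen prec a b ∨
      ∃ x y, rb x y ∧ (x = a ∨ Relation.TransGen prec a x) ∧
        (y = b ∨ Relation.TransGen prec y b) with hN
  have key : ∀ a b, Relation.TransGen (fun a b => rb a b ∨ prec a b) a b → N a b := by
    intro a b h
    induction h with
    | single h =>
      rcases h with h | h
      · exact Or.inr ⟨_, _, h, Or.inl rfl, Or.inl rfl⟩
      · exact Or.inl (Relation.TransGen.single h)
    | tail _ hstep ih =>
      rename_i b c hab
      rcases hstep with hbc | hbc
      · -- append an rb step
        rcases ih with hp | ⟨x, y, hxy, hax, hyb⟩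
        · exact Or.inr ⟨b, c, hbc, Or.inr hp, Or.inl rfl⟩
        · rcases hyb with rfl | hyb
          · exact Or.inr ⟨x, c, htrans hxy hbc, hax, Or.inl rfl⟩
          · rcases hinterval x y b c hxy hbc with h | h
            · exact Or.inr ⟨x, c, h, hax, Or.inl rfl⟩
            · exact absurd (Or.inr h) (hwf y b hyb)
      · -- append a prec step
        rcases ih with hp | ⟨x, y, hxy, hax, hyb⟩
        · exact Or.inl (hp.tail hbc)
        · refine Or.inr ⟨x, y, hxy, hax, Or.inr ?_⟩
          rcases hyb with rfl | hyb
          · exact Relation.TransGen.single hbc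
          · exact hyb.tail hbc
  intro a h
  rcases key a a h with hp | ⟨x, y, hxy, hax, hya⟩
  · exact hwf a a hp (Or.inl rfl)
  · rcases hax with rfl | hax
    · rcases hya with rfl | hya
      · exact hirr _ hxy
      · exact hwf y x hya (Or.inr hxy)
    · rcases hya with rfl | hya
      · exact hwf y x hax (Or.inr hxy)
      · exact hwf y x (hya.trans hax) (Or.inr hxy)
end

section
/- The writer order ⊲_w, defined as the transitive closure of happens-before ⊲ together with the cross-index relation wrDiff (where w_i wrDiff w'_j holds iff i ≠ j and there exist a write w_j and a scan s with w_i rf s, w_j rf s, and w_j ⊲ w'_j), is a strict partial order (irreflexive and transitive) on the writes of a history satisfying the Snapshot signature. -/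
/-- The cross-index relation: `w wrDiff w'` holds iff `w` is a write of index
`i`, `w'` a write of index `j ≠ i`, and there exist a write `wj` of index `j`
and a scan `s` with `w rf s`, `wj rf s` and `wj ⊲ w'`. -/
def wrDiff {E ι : Type*} (Wr : ι → Set E) (Sc : Set E)
    (rf hb : E → E → Prop) (w w' : E) : Prop :=
  ∃ i j, i ≠ j ∧ w ∈ Wr i ∧ w' ∈ Wr j ∧
    ∃ wj ∈ Wr j, ∃ s ∈ Sc, rf w s ∧ rf wj s ∧ hb wj w'

/-- `Sees Wr rf hb s w` : the scan `s` observes, at the index of `w`, the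
write `w` itself or a later write. -/
abbrev Sees {E ι : Type*} (Wr : ι → Set E) (rf hb : E → E → Prop) (s w : E) : Prop :=
  ∃ i, w ∈ Wr i ∧ ∃ u, u ∈ Wr i ∧ rf u s ∧ (u = w ∨ hb w u)

/-- One-step writer order restricted to writes. -/
abbrev WRel {E ι : Type*} (Wr : ι → Set E) (Sc : Set E)
    (rf hb : E → E → Prop) (a b : E) : Prop :=
  (∃ i, a ∈ Wr i) ∧ (∃ j, b ∈ Wr j) ∧ (hb a b ∨ wrDiff Wr Sc rf hb a b)

/-- The writer order `⊲_w = (⊲ ∪ wrDiff)⁺` is a strict partial order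
(transitive and irreflexive) on the writes of a Snapshot history. -/
theorem writerOrder_strictPartialOrder {E ι : Type*} (Wr : ι → Set E) (Sc : Set E)
    (rb prec rf hb : E → E → Prop)
    (hhb : hb = Relation.TransGen (fun a b => rb a b ∨ prec a b))
    (hrf_prec : ∀ a b, rf a b → prec a b)
    (hirr : Irreflexive hb)
    (hio : ∀ s ∈ Sc, ∀ i, ∃ w ∈ Wr i, rf w s)
    (hnwb : ∀ i, ∀ w ∈ Wr i, ∀ s ∈ Sc, rf w s →
        ¬ ∃ w' ∈ Wr i, hb w w' ∧ hb w' s)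
    (huniq : ∀ i, ∀ w ∈ Wr i, ∀ w' ∈ Wr i, ∀ s, rf w s → rf w' s → w = w')
    (htot : ∀ i, ∀ w ∈ Wr i, ∀ w' ∈ Wr i, w ≠ w' → hb w w' ∨ hb w' w)
    (hmono : ∀ i j, ∀ wi ∈ Wr i, ∀ wj ∈ Wr j, ∀ wi' ∈ Wr i, ∀ wj' ∈ Wr j,
        ∀ s ∈ Sc, ∀ s' ∈ Sc, rf wi s → rf wj s → rf wi' s' → rf wj' s' →
        hb wi wi' → ¬ hb wj' wj)
    (hdisj : ∀ i j, i ≠ j → Disjoint (Wr i) (Wr j))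
    (hrf_dom : ∀ w s, rf w s → (∃ i, w ∈ Wr i) ∧ s ∈ Sc) :
    Transitive (Relation.TransGen (fun a b => hb a b ∨ wrDiff Wr Sc rf hb a b)) ∧
    ∀ w, (∃ i, w ∈ Wr i) →
      ¬ Relation.TransGen (fun a b => hb a b ∨ wrDiff Wr Sc rf hb a b) w w := by
  classical
  have hbt : ∀ {a b c : E}, hb a b → hb b c → hb a c := by
    subst hhb; exact fun h1 h2 => h1.trans h2
  have hrfhb : ∀ {a b : E}, rf a b → hb a b := by
    subst hhb; exact fun h => Relation.TransGen.single (Or.inr (hrf_prec _ _ h))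
  have idxu : ∀ (w : E) (i j : ι), w ∈ Wr i → w ∈ Wr j → i = j := by
    intro w i j hi hj; by_contra h
    exact Set.disjoint_left.mp (hdisj i j h) hi hj
  -- A scan witnessing a `wrDiff` step sees the source but not the target.
  have L2 : ∀ a b, wrDiff Wr Sc rf hb a b →
      ∃ s ∈ Sc, Sees Wr rf hb s a ∧ ¬ Sees Wr rf hb s b := by
    rintro a b ⟨i, j, hij, ha, hb', wj, hwj, s, hs, hras, hrwjs, hwjb⟩
    refine ⟨s, hs, ⟨i, ha, a, ha, hras, Or.inl rfl⟩, ?_⟩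
    rintro ⟨j', hbj', u, huj', hrus, hub⟩
    have hjj : j' = j := idxu b j' j hbj' hb'
    subst hjj
    have huwj : u = wj := huniq j' u huj' wj hwj s hrus hrwjs
    subst huwj
    rcases hub with rfl | hbu
    · exact hirr _ hwjb
    · exact hirr _ (hbt hwjb hbu)
  -- `Sees` is inverse-monotone along one writer-order step.
  have L1 : ∀ a b, WRel Wr Sc rf hb a b → ∀ s ∈ Sc,
      Sees Wr rf hb s b → Sees Wr rf hb s a := by
    rintro a b ⟨⟨i, hai⟩, ⟨j, hbj⟩, hcase⟩ s hs ⟨j', hbj', u, huj', hrus, hub⟩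
    obtain ⟨v, hvi, hrvs⟩ := hio s hs i
    rcases hcase with hab | hwd
    · by_cases hva : v = a
      · exact ⟨i, hai, v, hvi, hrvs, Or.inl hva⟩
      rcases htot i v hvi a hai (fun h => hva h) with hva' | hav
      · exfalso
        have has : hb a s := by
          rcases hub with rfl | hbu
          · exact hbt hab (hrfhb hrus)
          · exact hbt hab (hbt hbu (hrfhb hrus))
        exact hnwb i v hvi s hs hrvs ⟨a, hai, hva', has⟩
      · exact ⟨i, hai, v, hvi, hrvs, Or.inr hav⟩
    · obtain ⟨i', j2, hij, hai', hbj2, wj, hwjj, s', hs', hras', hrwjs', hwjb⟩ := hwd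
      have hii : i' = i := idxu a i' i hai' hai
      subst hii
      have hjj2 : j' = j2 := idxu b j' j2 hbj' hbj2
      subst hjj2
      by_cases hva : v = a
      · exact ⟨i', hai, v, hvi, hrvs, Or.inl hva⟩
      rcases htot i' v hvi a hai (fun h => hva h) with hva' | hav
      · exfalso
        have hwju : hb wj u := by
          rcases hub with rfl | hbu
          · exact hwjb
          · exact hbt hwjb hbu
        exact hmono j' i' wj hwjj a hai u huj' v hvi s' hs' s hs
          hrwjs' hras' hrus hrvs hwju hva'
      · exact ⟨i', hai, v, hvi, hrvs, Or.inr hav⟩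
  -- ... hence along any writer-order path.
  have Lchain : ∀ a b, Relation.ReflTransGen (WRel Wr Sc rf hb) a b →
      ∀ s ∈ Sc, Sees Wr rf hb s b → Sees Wr rf hb s a := by
    intro a b h
    induction h with
    | refl => exact fun s _ h => h
    | tail hpath hlast ih =>
      intro s hs hsb
      exact ih s hs (L1 _ _ hlast s hs hsb)
  -- extract a `wrDiff` step from a writer-order path, or it is pure `hb`.
  have Lext : ∀ a b, Relation.TransGen (WRel Wr Sc rf hb) a b →
      hb a b ∨ ∃ x y, wrDiff Wr Sc rf hb x y ∧
        Relation.ReflTransGen (WRel Wr Sc rf hb) a x ∧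
        Relation.ReflTransGen (WRel Wr Sc rf hb) y b := by
    intro a b h
    induction h with
    | single h1 =>
      rcases h1.2.2 with hhb1 | hwd
      · exact Or.inl hhb1
      · exact Or.inr ⟨a, _, hwd, Relation.ReflTransGen.refl, Relation.ReflTransGen.refl⟩
    | tail hpath hlast ih =>
      rcases hlast.2.2 with hhb1 | hwd
      · rcases ih with hab | ⟨x, y, hxy, hax, hyb⟩
        · exact Or.inl (hbt hab hhb1)
        · exact Or.inr ⟨x, y, hxy, hax, hyb.tail hlast⟩
      · exact Or.inr ⟨_, _, hwd, hpath.to_reflTransGen, Relation.ReflTransGen.refl⟩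
  -- the restricted writer order is irreflexive.
  have Lirr : ∀ w, ¬ Relation.TransGen (WRel Wr Sc rf hb) w w := by
    intro w hcyc
    rcases Lext w w hcyc with hww | ⟨x, y, hxy, hwx, hyw⟩
    · exact hirr w hww
    · obtain ⟨s, hs, hsx, hsy⟩ := L2 x y hxy
      exact hsy (Lchain y x (hyw.trans hwx) s hs hsx)
  -- convert a path of the full relation starting at a write.
  have Lconv : ∀ w, (∃ i, w ∈ Wr i) → ∀ x,
      Relation.TransGen (fun a b => hb a b ∨ wrDiff Wr Sc rf hb a b) w x →
      hb w x ∨ ∃ v, (∃ j, v ∈ Wr j) ∧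
        Relation.TransGen (WRel Wr Sc rf hb) w v ∧ (v = x ∨ hb v x) := by
    intro w hw x h
    induction h with
    | single h1 =>
      rcases h1 with hhb1 | hwd
      · exact Or.inl hhb1
      · obtain ⟨i, j, -, -, hcj, -⟩ := id hwd
        exact Or.inr ⟨_, ⟨j, hcj⟩,
          Relation.TransGen.single ⟨hw, ⟨j, hcj⟩, Or.inr hwd⟩, Or.inl rfl⟩
    | tail hpath hlast ih =>
      rcases hlast with hhb1 | hwd
      · rcases ih with hwb | ⟨v, hv, hwv, hvb⟩
        · exact Or.inl (hbt hwb hhb1)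
        · refine Or.inr ⟨v, hv, hwv, Or.inr ?_⟩
          rcases hvb with rfl | hvb'
          · exact hhb1
          · exact hbt hvb' hhb1
      · obtain ⟨i, j, -, hbi, hcj, -⟩ := id hwd
        have wrel2 : WRel Wr Sc rf hb _ _ := ⟨⟨i, hbi⟩, ⟨j, hcj⟩, Or.inr hwd⟩
        rcases ih with hwb | ⟨v, hv, hwv, hvb⟩
        · exact Or.inr ⟨_, ⟨j, hcj⟩,
            (Relation.TransGen.single ⟨hw, ⟨i, hbi⟩, Or.inl hwb⟩).tail wrel2,
            Or.inl rfl⟩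
        · rcases hvb with rfl | hvb'
          · exact Or.inr ⟨_, ⟨j, hcj⟩, hwv.tail wrel2, Or.inl rfl⟩
          · exact Or.inr ⟨_, ⟨j, hcj⟩,
              (hwv.tail ⟨hv, ⟨i, hbi⟩, Or.inl hvb'⟩).tail wrel2, Or.inl rfl⟩
  refine ⟨fun a b c hab hbc => hab.trans hbc, ?_⟩
  intro w hw hcyc
  rcases Lconv w hw w hcyc with hww | ⟨v, hv, hwv, hvw⟩
  · exact hirr w hww
  · rcases hvw with rfl | hvw'
    · exact Lirr v hwv
    · exact Lirr w (hwv.tail ⟨hv, hw, Or.inl hvw'⟩)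
end

section
/- (Existence of a latest-in-time event) Let a finite nonempty Snapshot history be given, and let <_w be any strict total order on the writes extending the writer order ⊲_w. Then there exists a maximal candidate: either a write w that is <_w-greatest among all writes, ⊲-maximal among all events, and observed by no scan; or a scan s that is ⊲-maximal and such that for each index i there is a write wᵢ with wᵢ rf s and wᵢ is the <_w-greatest element of 𝕎ᵢ. -/
/-- The writer order `⊲_w = (⊲ ∪ wrDiff)⁺`. -/
def writerOrder {E ι : Type*} (Wr : ι → Set E) (Sc : Set E)
    (rf hb : E → E → Prop) : E → E → Prop :=
  Relation.TransGen (fun a b => hb a b ∨ wrDiff Wr Sc rf hb a b)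

private lemma exists_rmax' {E : Type*} (r : E → E → Prop) (htr : Transitive r)
    (s : Finset E) (hne : s.Nonempty) (hirr : ∀ a ∈ s, ¬ r a a) :
    ∃ m ∈ s, ∀ e ∈ s, ¬ r m e := by
  classical
  induction s using Finset.induction_on with
  | empty => simp at hne
  | @insert x t hx ih =>
    rcases t.eq_empty_or_nonempty with rfl | htne
    · refine ⟨x, by simp, ?_⟩
      intro e he
      simp only [Finset.mem_insert, Finset.notMem_empty, or_false] at he
      subst he
      exact hirr _ (Finset.mem_insert_self _ _)
    · obtain ⟨m, hm, hmax⟩ := ih htne (fun a ha => hirr a (Finset.mem_insert_of_mem ha))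
      by_cases h : r m x
      · refine ⟨x, Finset.mem_insert_self _ _, ?_⟩
        intro e he hre
        rcases Finset.mem_insert.mp he with rfl | he
        · exact hirr e (Finset.mem_insert_self _ _) hre
        · exact hmax e he (htr h hre)
      · refine ⟨m, Finset.mem_insert_of_mem hm, ?_⟩
        intro e he hre
        rcases Finset.mem_insert.mp he with rfl | he
        · exact h hre
        · exact hmax e he hre

private lemma exists_rmax {E : Type*} (r : E → E → Prop) (htr : Transitive r)
    (S : Set E) (hS : S.Finite) (hne : S.Nonempty) (hirr : ∀ a ∈ S, ¬ r a a) :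
    ∃ m ∈ S, ∀ e ∈ S, ¬ r m e := by
  obtain ⟨m, hm, hmax⟩ := exists_rmax' r htr hS.toFinset
    (by simpa [Set.Finite.toFinset] using hne)
    (fun a ha => hirr a (hS.mem_toFinset.mp ha))
  exact ⟨m, hS.mem_toFinset.mp hm, fun e he => hmax e (hS.mem_toFinset.mpr he)⟩

/-- (Existence of a latest-in-time event) In a finite nonempty Snapshot
history, for any strict total order `<_w` on the writes extending `⊲_w`,
there exists a maximal candidate: either a write `w` that is `<_w`-greatest
among all writes, `⊲`-maximal among all events, and observed by no scan; or a
scan `s` that is `⊲`-maximal and such that for each index `i` there is a write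
`wᵢ` with `wᵢ rf s` and `wᵢ` the `<_w`-greatest element of `𝕎ᵢ`. -/
theorem exists_maximal_candidate {E ι : Type*} [Fintype ι]
    (Wr : ι → Set E) (Sc : Set E)
    (rb prec rf hb : E → E → Prop)
    (hhb : hb = Relation.TransGen (fun a b => rb a b ∨ prec a b))
    (hrf_prec : ∀ a b, rf a b → prec a b)
    (hirr : Irreflexive hb)
    (hio : ∀ s ∈ Sc, ∀ i, ∃ w ∈ Wr i, rf w s)
    (hnwb : ∀ i, ∀ w ∈ Wr i, ∀ s ∈ Sc, rf w s →
        ¬ ∃ w' ∈ Wr i, hb w w' ∧ hb w' s)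
    (huniq : ∀ i, ∀ w ∈ Wr i, ∀ w' ∈ Wr i, ∀ s, rf w s → rf w' s → w = w')
    (htot : ∀ i, ∀ w ∈ Wr i, ∀ w' ∈ Wr i, w ≠ w' → hb w w' ∨ hb w' w)
    (hdisj : ∀ i j, i ≠ j → Disjoint (Wr i) (Wr j))
    (hrf_dom : ∀ w s, rf w s → (∃ i, w ∈ Wr i) ∧ s ∈ Sc)
    (hfin : (Sc ∪ ⋃ i, Wr i).Finite)
    (hne : (Sc ∪ ⋃ i, Wr i).Nonempty)
    (ltw : E → E → Prop)
    (hltw_irr : ∀ w, (∃ i, w ∈ Wr i) → ¬ ltw w w)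
    (hltw_trans : ∀ a b c, ltw a b → ltw b c → ltw a c)
    (hltw_tot : ∀ w w', (∃ i, w ∈ Wr i) → (∃ j, w' ∈ Wr j) → w ≠ w' →
        ltw w w' ∨ ltw w' w)
    (hltw_ext : ∀ w w', (∃ i, w ∈ Wr i) → (∃ j, w' ∈ Wr j) →
        writerOrder Wr Sc rf hb w w' → ltw w w') :
    (∃ i, ∃ w ∈ Wr i,
        (∀ j, ∀ w' ∈ Wr j, w' ≠ w → ltw w' w) ∧
        (∀ e ∈ Sc ∪ ⋃ k, Wr k, ¬ hb w e) ∧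
        (∀ s ∈ Sc, ¬ rf w s)) ∨
    (∃ s ∈ Sc,
        (∀ e ∈ Sc ∪ ⋃ k, Wr k, ¬ hb s e) ∧
        (∀ i, ∃ w ∈ Wr i, rf w s ∧ ∀ w' ∈ Wr i, w' ≠ w → ltw w' w)) := by
  classical
  have htrans : Transitive hb := by
    subst hhb; exact fun a b c hab hbc => hab.trans hbc
  have hrf_hb : ∀ w s, rf w s → hb w s := by
    intro w s h; subst hhb
    exact Relation.TransGen.single (Or.inr (hrf_prec w s h))
  have hWfin : (⋃ i, Wr i).Finite := hfin.subset Set.subset_union_right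
  have hScfin : Sc.Finite := hfin.subset Set.subset_union_left
  rcases (⋃ i, Wr i).eq_empty_or_nonempty with hWe | hWne
  · -- no writes at all
    have hScne : Sc.Nonempty := by
      rcases hne with ⟨e, he | he⟩
      · exact ⟨e, he⟩
      · rw [hWe] at he; exact absurd he (Set.notMem_empty e)
    obtain ⟨s, hs, hmax⟩ := exists_rmax hb htrans Sc hScfin hScne (fun a _ => hirr a)
    right
    refine ⟨s, hs, ?_, ?_⟩
    · intro e he
      rcases he with he | he
      · exact hmax e he
      · rw [hWe] at he; exact absurd he (Set.notMem_empty e)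
    · intro i
      obtain ⟨w, hw, _⟩ := hio s hs i
      exact absurd (hWe ▸ Set.mem_iUnion.mpr ⟨i, hw⟩) (Set.notMem_empty w)
  · -- writes nonempty: take the ltw-greatest write
    obtain ⟨wmax, hwmaxW, hmaxltw⟩ := exists_rmax ltw (fun a b c => hltw_trans a b c)
      (⋃ i, Wr i) hWfin hWne (fun a ha => hltw_irr a (Set.mem_iUnion.mp ha))
    obtain ⟨i0, hwmaxi0⟩ := Set.mem_iUnion.mp hwmaxW
    have notlt : ∀ {e : E} {j : ι}, e ∈ Wr j → ¬ hb wmax e := by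
      intro e j he hhbe
      exact hmaxltw e (Set.mem_iUnion.mpr ⟨j, he⟩)
        (hltw_ext wmax e ⟨i0, hwmaxi0⟩ ⟨j, he⟩ (Relation.TransGen.single (Or.inl hhbe)))
    by_cases hread : ∃ s ∈ Sc, rf wmax s
    · -- some scan reads wmax : produce a scan candidate
      obtain ⟨s0, hs0, hrf0⟩ := hread
      set RS : Set E := {t | t ∈ Sc ∧ rf wmax t} with hRS
      obtain ⟨s, hsRS, hsmax⟩ := exists_rmax hb htrans RS
        (hScfin.subset (fun t ht => ht.1)) ⟨s0, hs0, hrf0⟩ (fun a _ => hirr a)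
      obtain ⟨hsSc, hrfs⟩ := hsRS
      have hbws : hb wmax s := hrf_hb _ _ hrfs
      right
      refine ⟨s, hsSc, ?_, ?_⟩
      · intro e he hbe
        rcases he with he | he
        · obtain ⟨w, hw, hrfw⟩ := hio e he i0
          by_cases hwe : w = wmax
          · subst hwe
            exact hsmax e ⟨he, hrfw⟩ hbe
          · rcases htot i0 w hw wmax hwmaxi0 hwe with h | h
            · exact hnwb i0 w hw e he hrfw ⟨wmax, hwmaxi0, h, htrans hbws hbe⟩
            · exact notlt hw h
        · obtain ⟨j, hj⟩ := Set.mem_iUnion.mp he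
          exact notlt hj (htrans hbws hbe)
      · intro i
        obtain ⟨wi, hwi, hrfi⟩ := hio s hsSc i
        refine ⟨wi, hwi, hrfi, ?_⟩
        intro w' hw' hne'
        rcases htot i w' hw' wi hwi hne' with h | h
        · exact hltw_ext w' wi ⟨i, hw'⟩ ⟨i, hwi⟩ (Relation.TransGen.single (Or.inl h))
        · by_cases hii : i = i0
          · subst hii
            have : wi = wmax := huniq i wi hwi wmax hwmaxi0 s hrfi hrfs
            subst this
            exact (notlt hw' h).elim
          · have hwd : wrDiff Wr Sc rf hb wmax w' :=
              ⟨i0, i, Ne.symm hii, hwmaxi0, hw', wi, hwi, s, hsSc, hrfs, hrfi, h⟩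
            exact absurd
              (hltw_ext wmax w' ⟨i0, hwmaxi0⟩ ⟨i, hw'⟩ (Relation.TransGen.single (Or.inr hwd)))
              (hmaxltw w' (Set.mem_iUnion.mpr ⟨i, hw'⟩))
    · -- no scan reads wmax : write candidate
      left
      refine ⟨i0, wmax, hwmaxi0, ?_, ?_, ?_⟩
      · intro j w' hw' hne'
        rcases hltw_tot w' wmax ⟨j, hw'⟩ ⟨i0, hwmaxi0⟩ hne' with h | h
        · exact h
        · exact absurd h (hmaxltw w' (Set.mem_iUnion.mpr ⟨j, hw'⟩))
      · intro e he hbe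
        rcases he with he | he
        · obtain ⟨w, hw, hrfw⟩ := hio e he i0
          by_cases hwe : w = wmax
          · subst hwe; exact hread ⟨e, he, hrfw⟩
          · rcases htot i0 w hw wmax hwmaxi0 hwe with h | h
            · exact hnwb i0 w hw e he hrfw ⟨wmax, hwmaxi0, h, hbe⟩
            · exact notlt hw h
        · obtain ⟨j, hj⟩ := Set.mem_iUnion.mp he
          exact notlt hj hbe
      · intro t ht hrft
        exact hread ⟨t, ht, hrft⟩
end

section
/- (Monotonicity from total scan order) Suppose scans are totally ordered: for any two scans s ≠ s', either s ⊏ s' or s' ⊏ s. Suppose further rf-uniqueness (a scan observes at most one write per index) and the no-write-between property hold. Then the monotonicity property holds: if wᵢ rf s, w_j rf s, w'ᵢ rf s', w'_j rf s', and wᵢ ⊲ w'ᵢ, then ¬(w'_j ⊲ w_j). -/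
/-- (Monotonicity from total scan order) If scans are totally ordered by
returns-before, and rf-uniqueness and no-write-between hold, then the
monotonicity property holds: if `wᵢ rf s`, `w_j rf s`, `w'ᵢ rf s'`,
`w'_j rf s'` and `wᵢ ⊲ w'ᵢ`, then `¬ (w'_j ⊲ w_j)`. -/
theorem monotonicity_of_scan_totality {E ι : Type*}
    (Wr : ι → Set E) (Sc : Set E)
    (rb prec rf hb : E → E → Prop)
    (hhb : hb = Relation.TransGen (fun a b => rb a b ∨ prec a b))
    (hrf_prec : ∀ a b, rf a b → prec a b)
    (hirr : Irreflexive hb)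
    (hscan_tot : ∀ s ∈ Sc, ∀ s' ∈ Sc, s ≠ s' → rb s s' ∨ rb s' s)
    (huniq : ∀ i, ∀ w ∈ Wr i, ∀ w' ∈ Wr i, ∀ s, rf w s → rf w' s → w = w')
    (hnwb : ∀ i, ∀ w ∈ Wr i, ∀ s ∈ Sc, rf w s →
        ¬ ∃ w' ∈ Wr i, hb w w' ∧ hb w' s) :
    ∀ i j, ∀ wi ∈ Wr i, ∀ wj ∈ Wr j, ∀ wi' ∈ Wr i, ∀ wj' ∈ Wr j,
      ∀ s ∈ Sc, ∀ s' ∈ Sc, rf wi s → rf wj s → rf wi' s' → rf wj' s' →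
      hb wi wi' → ¬ hb wj' wj := by
  intro i j wi hwi wj hwj wi' hwi' wj' hwj' s hs s' hs' hrf1 hrf2 hrf3 hrf4 hii hjj
  have hbstep : ∀ a b, rb a b ∨ prec a b → hb a b := by
    intro a b h; rw [hhb]; exact Relation.TransGen.single h
  have htrans : Transitive hb := by rw [hhb]; exact fun _ _ _ => Relation.TransGen.trans
  by_cases heq : s = s'
  · subst heq
    have : wi = wi' := huniq i wi hwi wi' hwi' s hrf1 hrf3
    exact hirr wi (this ▸ hii)
  · rcases hscan_tot s hs s' hs' heq with h | h
    · -- rb s s' : wj' rf s', hb wj' wj, hb wj s' via prec wj s then rb s s'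
      exact hnwb j wj' hwj' s' hs' hrf4
        ⟨wj, hwj, hjj, htrans (hbstep _ _ (Or.inr (hrf_prec _ _ hrf2))) (hbstep _ _ (Or.inl h))⟩
    · -- rb s' s : wi rf s, hb wi wi', hb wi' s via prec wi' s' then rb s' s
      exact hnwb i wi hwi s hs hrf1
        ⟨wi', hwi', hii, htrans (hbstep _ _ (Or.inr (hrf_prec _ _ hrf3))) (hbstep _ _ (Or.inl h))⟩
end

section
/- (Afek monotonicity core) Suppose for virtual scans σ, σ' we have rep events with a_σ,j ⊏ b_σ,i and a_σ',i ⊏ b_σ',j (each virtual scan's first-pass reads return before its second-pass reads), the register axiom no-write-between, and rep writes with wa(w_j) rf a_σ,j, wa(w_j) rf b_σ,j, wa(w'_j) rf a_σ',j, wa(w'_j) rf b_σ',j, and similarly for index i. If wa(w_i) ⊲ wa(w'_i) then ¬(wa(w'_j) ⊲ wa(w_j)). -/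
/-- (Afek monotonicity core) For virtual scans `σ`, `σ'` whose first-pass
reads return before their second-pass reads, with the no-write-between axiom
and the double-read property (each scan observes the same write in both
passes), if `wa wᵢ ⊲ wa w'ᵢ` then `¬ (wa w'_j ⊲ wa w_j)`. -/
theorem afek_monotonicity_core {E : Type*} (rb hb rf : E → E → Prop)
    (hinterval : ∀ a b c d, rb a b → rb c d → rb a d ∨ rb c b)
    (hirr : Irreflexive hb) (htrans : Transitive hb)
    (hrb_hb : ∀ a b, rb a b → hb a b)
    (hrf_hb : ∀ a b, rf a b → hb a b)
    (Wi Wj : Set E)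
    (wai wai' waj waj' : E)
    (aσi aσj bσi bσj aσ'i aσ'j bσ'i bσ'j : E)
    (hwi : wai ∈ Wi) (hwi' : wai' ∈ Wi) (hwj : waj ∈ Wj) (hwj' : waj' ∈ Wj)
    -- each scan's first-pass reads return before its second-pass reads
    (hs1 : rb aσi bσi) (hs2 : rb aσi bσj) (hs3 : rb aσj bσi) (hs4 : rb aσj bσj)
    (hs1' : rb aσ'i bσ'i) (hs2' : rb aσ'i bσ'j)
    (hs3' : rb aσ'j bσ'i) (hs4' : rb aσ'j bσ'j)
    -- double-read property: each scan observes the same write in both passes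
    (hr1 : rf waj aσj) (hr2 : rf waj bσj)
    (hr3 : rf wai aσi) (hr4 : rf wai bσi)
    (hr5 : rf waj' aσ'j) (hr6 : rf waj' bσ'j)
    (hr7 : rf wai' aσ'i) (hr8 : rf wai' bσ'i)
    -- no-write-between, per cell
    (hnwbJ : ∀ w r, w ∈ Wj → rf w r → ¬ ∃ w'' ∈ Wj, hb w w'' ∧ hb w'' r)
    (hnwbI : ∀ w r, w ∈ Wi → rf w r → ¬ ∃ w'' ∈ Wi, hb w w'' ∧ hb w'' r)
    -- write-totality, per cell
    (htotJ : ∀ w ∈ Wj, ∀ w' ∈ Wj, w ≠ w' → hb w w' ∨ hb w' w)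
    (htotI : ∀ w ∈ Wi, ∀ w' ∈ Wi, w ≠ w' → hb w w' ∨ hb w' w) :
    hb wai wai' → ¬ hb waj' waj := by
  intro hii hjj
  rcases hinterval aσj bσi aσ'i bσ'j hs3 hs2' with h | h
  · exact hnwbJ waj' bσ'j hwj' hr6
      ⟨waj, hwj, hjj, htrans (hrf_hb _ _ hr1) (hrb_hb _ _ h)⟩
  · exact hnwbI wai bσi hwi hr4
      ⟨wai', hwi', hii, htrans (hrf_hb _ _ hr7) (hrb_hb _ _ h)⟩
end
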